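/- Let T ⊆ ℝⁿ be nonempty, let ν be a point of minimal ℓ0-norm in T, and let x', x* ∈ T, λ', λ* ∈ ℝ≥0ⁿ satisfy: (a) |x'ᵢ|·λ'ᵢ = 0 and |x'ᵢ| + λ'ᵢ > 0 for all i with ‖x'‖₀ = ‖ν‖₀; (b) |x*ᵢ|·λ*ᵢ = 0 for all i; (c) ‖λ'‖₀ ≤ ‖λ*‖₀. Then ‖x*‖₀ = ‖ν‖₀, i.e., x* is also a sparsest point of T. -/
import Mathlib


open Finset

theorem stmt_16 (n : ℕ) (T : Set (Fin n → ℝ)) (hT : T.Nonempty)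
    (ν : Fin n → ℝ) (hν : ν ∈ T)
    (hsparse : ∀ x ∈ T, (Finset.univ.filter (fun i => ν i ≠ 0)).card
      ≤ (Finset.univ.filter (fun i => x i ≠ 0)).card)
    (x' xs lam' lams : Fin n → ℝ)
    (hx' : x' ∈ T) (hxs : xs ∈ T)
    (hlam' : ∀ i, 0 ≤ lam' i) (hlams : ∀ i, 0 ≤ lams i)
    (ha1 : ∀ i, |x' i| * lam' i = 0)
    (ha2 : ∀ i, 0 < |x' i| + lam' i)
    (ha3 : (Finset.univ.filter (fun i => x' i ≠ 0)).card
      = (Finset.univ.filter (fun i => ν i ≠ 0)).card)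
    (hb : ∀ i, |xs i| * lams i = 0)
    (hc : (Finset.univ.filter (fun i => lam' i ≠ 0)).card
      ≤ (Finset.univ.filter (fun i => lams i ≠ 0)).card) :
    (Finset.univ.filter (fun i => xs i ≠ 0)).card
      = (Finset.univ.filter (fun i => ν i ≠ 0)).card := by
  -- x' support is the complement of lam' support
  have hcompl : (Finset.univ.filter (fun i => x' i ≠ 0))
      = (Finset.univ.filter (fun i => lam' i ≠ 0))ᶜ := by
    ext i
    simp only [mem_filter, mem_univ, true_and, mem_compl, not_not]
    constructor
    · intro hx
      have := ha1 i
      have hax : |x' i| ≠ 0 := abs_ne_zero.mpr hx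
      exact (mul_eq_zero.mp this).resolve_left hax
    · intro hl
      have := ha2 i
      rw [hl, add_zero] at this
      exact abs_pos.mp this
  have h1 : (Finset.univ.filter (fun i => x' i ≠ 0)).card
      = n - (Finset.univ.filter (fun i => lam' i ≠ 0)).card := by
    rw [hcompl, card_compl, Fintype.card_fin]
  -- xs support ⊆ complement of lams support
  have hsub : (Finset.univ.filter (fun i => xs i ≠ 0))
      ⊆ (Finset.univ.filter (fun i => lams i ≠ 0))ᶜ := by
    intro i hi
    simp only [mem_filter, mem_univ, true_and] at hi
    simp only [mem_compl, mem_filter, mem_univ, true_and, not_not]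
    exact (mul_eq_zero.mp (hb i)).resolve_left (abs_ne_zero.mpr hi)
  have h2 : (Finset.univ.filter (fun i => xs i ≠ 0)).card
      ≤ n - (Finset.univ.filter (fun i => lams i ≠ 0)).card := by
    calc _ ≤ ((Finset.univ.filter (fun i => lams i ≠ 0))ᶜ).card := card_le_card hsub
      _ = _ := by rw [card_compl, Fintype.card_fin]
  have h3 : n - (Finset.univ.filter (fun i => lams i ≠ 0)).card
      ≤ n - (Finset.univ.filter (fun i => lam' i ≠ 0)).card :=
    Nat.sub_le_sub_left hc n
  have h4 := hsparse xs hxs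
  omega
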